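/- The partial derivative of the dual function D(μ) = f(μ) + g(μ) with respect to μ_j, at any μ where the user-side maximizer x(μ) is unique, equals K_j(μ) − ∑_i x_{ij}(μ), where K_j(μ) = min{N_U, e^{μ_j − 1}} and x_{ij}(μ) is the indicator that j uniquely maximizes log c_{ij} − μ_j. -/

import Mathlib

open Finset

private lemma conc_ineq (u k k0 : ℝ) (hk : 0 < k) (hk0 : 0 < k0) :
    k * (u - Real.log k) ≤ k0 * (u - Real.log k0) + (u - Real.log k0 - 1) * (k - k0) := by
  have h := Real.log_le_sub_one_of_pos (div_pos hk0 hk)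
  rw [Real.log_div hk0.ne' hk.ne'] at h
  have h3 : k * (k0 / k) = k0 := by field_simp
  nlinarith [mul_le_mul_of_nonneg_left h hk.le]

private lemma phi_le_phi_kstar (N u : ℝ) (hN : 0 < N) (k : ℝ) (hk : k ∈ Set.Ioc (0:ℝ) N) :
    k * (u - Real.log k) ≤
      min N (Real.exp (u-1)) * (u - Real.log (min N (Real.exp (u-1)))) := by
  set k0 := min N (Real.exp (u-1)) with hk0def
  have hk0 : 0 < k0 := lt_min hN (Real.exp_pos _)
  have h := conc_ineq u k k0 hk.1 hk0
  have hfac : (u - Real.log k0 - 1) * (k - k0) ≤ 0 := by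
    rcases le_or_gt (Real.exp (u-1)) N with hle | hlt
    · have hk0e : k0 = Real.exp (u-1) := min_eq_right hle
      rw [hk0e, Real.log_exp]
      have : (u - (u-1) - 1) * (k - Real.exp (u-1)) = 0 := by ring
      linarith
    · have hk0N : k0 = N := min_eq_left hlt.le
      have hlog : Real.log N < u - 1 := by
        have := Real.log_lt_log hN hlt
        rwa [Real.log_exp] at this
      have h1 : 0 ≤ u - Real.log k0 - 1 := by rw [hk0N]; linarith
      have h2 : k - k0 ≤ 0 := by rw [hk0N]; linarith [hk.2]
      exact mul_nonpos_of_nonneg_of_nonpos h1 h2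
  linarith

private lemma csupr_eq (N : ℝ) (hN : 0 < N) (u : ℝ) :
    (⨆ k : Set.Ioc (0:ℝ) N, (k:ℝ) * (u - Real.log (k:ℝ))) =
      min N (Real.exp (u-1)) * (u - Real.log (min N (Real.exp (u-1)))) := by
  have hmem : min N (Real.exp (u-1)) ∈ Set.Ioc (0:ℝ) N :=
    ⟨lt_min hN (Real.exp_pos _), min_le_left _ _⟩
  haveI : Nonempty (Set.Ioc (0:ℝ) N) := ⟨⟨_, hmem⟩⟩
  have hbdd : BddAbove (Set.range fun k : Set.Ioc (0:ℝ) N => (k:ℝ) * (u - Real.log (k:ℝ))) := by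
    refine ⟨min N (Real.exp (u-1)) * (u - Real.log (min N (Real.exp (u-1)))), ?_⟩
    rintro x ⟨k, rfl⟩
    exact phi_le_phi_kstar N u hN k k.2
  apply le_antisymm
  · exact ciSup_le fun k => phi_le_phi_kstar N u hN k k.2
  · exact le_ciSup hbdd (⟨_, hmem⟩ : Set.Ioc (0:ℝ) N)

private lemma hasDerivAt_sup (N : ℝ) (hN : 0 < N) (u0 : ℝ) :
    HasDerivAt (fun u => ⨆ k : Set.Ioc (0:ℝ) N, (k:ℝ) * (u - Real.log (k:ℝ)))
      (min N (Real.exp (u0-1))) u0 := by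
  set ks : ℝ → ℝ := fun u => min N (Real.exp (u-1)) with hks
  have hksmem : ∀ u, ks u ∈ Set.Ioc (0:ℝ) N :=
    fun u => ⟨lt_min hN (Real.exp_pos _), min_le_left _ _⟩
  have hval : ∀ u, (⨆ k : Set.Ioc (0:ℝ) N, (k:ℝ) * (u - Real.log (k:ℝ)))
      = ks u * (u - Real.log (ks u)) := fun u => csupr_eq N hN u
  rw [hasDerivAt_iff_isLittleO, Asymptotics.isLittleO_iff]
  intro ε hε
  have hcont : Continuous ks :=
    continuous_const.min (Real.continuous_exp.comp (continuous_id.sub continuous_const))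
  have hev : ∀ᶠ u in nhds u0, |ks u - ks u0| ≤ ε := by
    have := Metric.tendsto_nhds.mp (hcont.tendsto u0) ε hε
    filter_upwards [this] with u hu
    rw [Real.dist_eq] at hu
    exact hu.le
  filter_upwards [hev] with u hu
  rw [Real.norm_eq_abs, Real.norm_eq_abs, smul_eq_mul, hval u, hval u0]
  set A := ks u * (u - Real.log (ks u)) - ks u0 * (u0 - Real.log (ks u0)) - (u - u0) * ks u0
  have hlow : ks u0 * (u - Real.log (ks u0)) ≤ ks u * (u - Real.log (ks u)) :=
    phi_le_phi_kstar N u hN (ks u0) (hksmem u0)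
  have hup : ks u * (u0 - Real.log (ks u)) ≤ ks u0 * (u0 - Real.log (ks u0)) :=
    phi_le_phi_kstar N u0 hN (ks u) (hksmem u)
  have h1 : 0 ≤ A := by simp only [A]; nlinarith [hlow]
  have h2 : A ≤ (ks u - ks u0) * (u - u0) := by simp only [A]; nlinarith [hup]
  have h3 : (ks u - ks u0) * (u - u0) ≤ |ks u - ks u0| * |u - u0| := by
    calc (ks u - ks u0) * (u - u0) ≤ |(ks u - ks u0) * (u - u0)| := le_abs_self _
    _ = |ks u - ks u0| * |u - u0| := abs_mul _ _
  rw [abs_of_nonneg h1]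
  have h4 : |ks u - ks u0| * |u - u0| ≤ ε * |u - u0| :=
    mul_le_mul_of_nonneg_right hu (abs_nonneg _)
  linarith

theorem dual_partial_derivative
    (U B : Type*) [Fintype U] [Fintype B] [Nonempty U] [Nonempty B] [DecidableEq B]
    (c : U → B → ℝ) (hc : ∀ i j, 0 < c i j) (μ : B → ℝ) (j : B)
    (jstar : U → B)
    (huniq : ∀ i j', j' ≠ jstar i →
      Real.log (c i j') - μ j' < Real.log (c i (jstar i)) - μ (jstar i)) :
    HasDerivAt
      (fun t : ℝ =>
        (∑ i, ⨆ j', (Real.log (c i j') - Function.update μ j t j')) +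
        ∑ j', ⨆ k : Set.Ioc (0 : ℝ) (Fintype.card U : ℝ),
          (k : ℝ) * (Function.update μ j t j' - Real.log (k : ℝ)))
      (min (Fintype.card U : ℝ) (Real.exp (μ j - 1)) -
        ∑ i, (if jstar i = j then (1 : ℝ) else 0))
      (μ j) := by
  set N : ℝ := (Fintype.card U : ℝ) with hNdef
  have hN : 0 < N := by
    simp only [hNdef, Nat.cast_pos]
    exact Fintype.card_pos
  -- the f part
  have hupd : ∀ (t : ℝ) (j' : B), Function.update μ j t j' = if j' = j then t else μ j' :=
    fun t j' => Function.update_apply μ j t j'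
  have hcontupd : ∀ j' : B, Continuous fun t : ℝ => Function.update μ j t j' := by
    intro j'
    simp only [hupd]
    by_cases h : j' = j
    · simp only [h, if_pos rfl]; exact continuous_id
    · simp only [if_neg h]; exact continuous_const
  have hev : ∀ᶠ t in nhds (μ j), ∀ i, ∀ j', j' ≠ jstar i →
      Real.log (c i j') - Function.update μ j t j'
        < Real.log (c i (jstar i)) - Function.update μ j t (jstar i) := by
    rw [Filter.eventually_all]
    intro i
    rw [Filter.eventually_all]
    intro j'
    by_cases h : j' = jstar i
    · filter_upwards with t ht; exact absurd h ht
    · have hc1 : Continuous fun t : ℝ => Real.log (c i j') - Function.update μ j t j' :=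
        continuous_const.sub (hcontupd j')
      have hc2 : Continuous fun t : ℝ =>
          Real.log (c i (jstar i)) - Function.update μ j t (jstar i) :=
        continuous_const.sub (hcontupd (jstar i))
      have hlt : Real.log (c i j') - Function.update μ j (μ j) j'
          < Real.log (c i (jstar i)) - Function.update μ j (μ j) (jstar i) := by
        rw [Function.update_eq_self]
        exact huniq i j' h
      filter_upwards [(hc1.continuousAt (x := μ j)).eventually_lt
        (hc2.continuousAt (x := μ j)) hlt] with t ht _
      exact ht
  have heq : (fun t : ℝ => ∑ i, ⨆ j', (Real.log (c i j') - Function.update μ j t j'))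
      =ᶠ[nhds (μ j)]
      (fun t : ℝ => ∑ i, (Real.log (c i (jstar i)) - Function.update μ j t (jstar i))) := by
    filter_upwards [hev] with t ht
    refine Finset.sum_congr rfl fun i _ => ?_
    apply le_antisymm
    · refine ciSup_le fun j' => ?_
      by_cases h : j' = jstar i
      · rw [h]
      · exact (ht i j' h).le
    · exact le_ciSup (f := fun j' => Real.log (c i j') - Function.update μ j t j')
        (Set.Finite.bddAbove (Set.finite_range _)) (jstar i)
  have hf' : HasDerivAt
      (fun t : ℝ => ∑ i, (Real.log (c i (jstar i)) - Function.update μ j t (jstar i)))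
      (∑ i, -(if jstar i = j then (1:ℝ) else 0)) (μ j) := by
    apply HasDerivAt.fun_sum
    intro i _
    by_cases h : jstar i = j
    · rw [if_pos h]
      have hfun : (fun t : ℝ => Real.log (c i (jstar i)) - Function.update μ j t (jstar i))
          = fun t : ℝ => Real.log (c i (jstar i)) - t := by
        funext t; rw [h, Function.update_self]
      rw [hfun]
      simpa using (hasDerivAt_id (μ j)).const_sub (Real.log (c i (jstar i)))
    · simp only [Function.update_of_ne h, if_neg h, neg_zero]
      exact hasDerivAt_const _ _
  have hf : HasDerivAt
      (fun t : ℝ => ∑ i, ⨆ j', (Real.log (c i j') - Function.update μ j t j'))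
      (∑ i, -(if jstar i = j then (1:ℝ) else 0)) (μ j) :=
    hf'.congr_of_eventuallyEq heq
  -- the g part
  have hg : HasDerivAt
      (fun t : ℝ => ∑ j', ⨆ k : Set.Ioc (0:ℝ) N,
        (k : ℝ) * (Function.update μ j t j' - Real.log (k : ℝ)))
      (∑ j', if j' = j then min N (Real.exp (μ j - 1)) else 0) (μ j) := by
    apply HasDerivAt.fun_sum
    intro j' _
    by_cases h : j' = j
    · subst h
      simp only [Function.update_self, if_pos rfl]
      exact hasDerivAt_sup N hN (μ j')
    · simp only [Function.update_of_ne h, if_neg h]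
      exact hasDerivAt_const _ _
  have h := hf.add hg
  simp only [Finset.sum_ite_eq', Finset.mem_univ, if_true, Finset.sum_neg_distrib] at h
  exact h.congr_deriv (by ring)
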